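/- The uncertainty relation is equivalent to all symplectic eigenvalues being at least one: let Γ be a real symmetric positive definite 2N×2N matrix with Williamson form S Γ Sᵀ = diag(a₁,a₁,…,a_N,a_N), where S ∈ Sp(2N,ℝ) and a_j > 0. Then the complex Hermitian matrix Γ + iσ (entries of Γ and σ viewed as complex numbers) is positive semidefinite if and only if a_j ≥ 1 for all j = 1,…,N. -/

import Mathlib

open Matrix Polynomial
open ComplexOrder

noncomputable section

/-- The standard symplectic form matrix: block diagonal with 2×2 blocks [[0,1],[-1,0]]. -/
def symplForm (n : ℕ) : Matrix (Fin n) (Fin n) ℝ :=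
  Matrix.of fun i j =>
    if (i : ℕ) + 1 = (j : ℕ) ∧ (i : ℕ) % 2 = 0 then 1
    else if (j : ℕ) + 1 = (i : ℕ) ∧ (j : ℕ) % 2 = 0 then -1 else 0

/-- Membership in the real symplectic group: `S σ Sᵀ = σ`. -/
def IsSymplectic {n : ℕ} (S : Matrix (Fin n) (Fin n) ℝ) : Prop :=
  S * symplForm n * Sᵀ = symplForm n

/-- The Williamson diagonal matrix `diag(a₁,a₁,…,a_N,a_N)`. -/
def WDiag {N : ℕ} (a : Fin N → ℝ) : Matrix (Fin (2 * N)) (Fin (2 * N)) ℝ :=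
  Matrix.diagonal fun i => a ⟨(i : ℕ) / 2, by have := i.isLt; omega⟩

/-- A covariance matrix: real symmetric with `γ + iσ` positive semidefinite. -/
def IsCovMatrix {n : ℕ} (γ : Matrix (Fin n) (Fin n) ℝ) : Prop :=
  γ.IsSymm ∧
    (γ.map (Complex.ofReal) + Complex.I • (symplForm n).map Complex.ofReal).PosSemidef

/-- The block-diagonal direct sum of two square matrices. -/
def dirSum {m n : ℕ} (A : Matrix (Fin m) (Fin m) ℝ) (B : Matrix (Fin n) (Fin n) ℝ) :
    Matrix (Fin (m + n)) (Fin (m + n)) ℝ :=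
  Matrix.reindex finSumFinEquiv finSumFinEquiv (Matrix.fromBlocks A 0 0 B)

/-- Separability of a covariance matrix with respect to the split `A|B`. -/
def IsSepCov (nA nB : ℕ) (γ : Matrix (Fin (nA + nB)) (Fin (nA + nB)) ℝ) : Prop :=
  ∃ (γA : Matrix (Fin nA) (Fin nA) ℝ) (γB : Matrix (Fin nB) (Fin nB) ℝ),
    IsCovMatrix γA ∧ IsCovMatrix γB ∧ (γ - dirSum γA γB).PosSemidef

namespace UncertAux

variable {N : ℕ}

/-- index `2j` -/
def e0 (N : ℕ) (j : Fin N) : Fin (2 * N) := ⟨2 * (j : ℕ), by have := j.isLt; omega⟩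
/-- index `2j+1` -/
def e1 (N : ℕ) (j : Fin N) : Fin (2 * N) := ⟨2 * (j : ℕ) + 1, by have := j.isLt; omega⟩

def pairEquiv (N : ℕ) : Fin N × Fin 2 ≃ Fin (2 * N) where
  toFun p := ⟨2 * (p.1 : ℕ) + (p.2 : ℕ), by have := p.1.isLt; have := p.2.isLt; omega⟩
  invFun i := (⟨(i : ℕ) / 2, by have := i.isLt; omega⟩, ⟨(i : ℕ) % 2, by omega⟩)
  left_inv := by
    rintro ⟨⟨j, hj⟩, ⟨r, hr⟩⟩
    have h1 : (2 * j + r) / 2 = j := by omega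
    have h2 : (2 * j + r) % 2 = r := by omega
    simp only [Prod.ext_iff, Fin.ext_iff]
    exact ⟨h1, h2⟩
  right_inv := by
    rintro ⟨i, hi⟩
    apply Fin.ext
    show 2 * (i / 2) + i % 2 = i
    omega

lemma reindex_sum (g : Fin (2 * N) → ℂ) :
    ∑ i, g i = ∑ j : Fin N, (g (e0 N j) + g (e1 N j)) := by
  rw [← Equiv.sum_comp (pairEquiv N) g, Fintype.sum_prod_type]
  refine Finset.sum_congr rfl fun j _ => ?_
  rw [Fin.sum_univ_two]
  rfl

lemma sig_mulVec_e0 (x : Fin (2 * N) → ℂ) (j : Fin N) :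
    ((symplForm (2 * N)).map Complex.ofReal *ᵥ x) (e0 N j) = x (e1 N j) := by
  simp only [Matrix.mulVec, dotProduct]
  rw [Finset.sum_eq_single (e1 N j)]
  · have h : symplForm (2 * N) (e0 N j) (e1 N j) = 1 := by
      show (if 2 * (j : ℕ) + 1 = 2 * (j : ℕ) + 1 ∧ 2 * (j : ℕ) % 2 = 0 then (1 : ℝ)
        else if 2 * (j : ℕ) + 1 + 1 = 2 * (j : ℕ) ∧ (2 * (j : ℕ) + 1) % 2 = 0 then -1 else 0) = 1
      have hcond : 2 * (j : ℕ) + 1 = 2 * (j : ℕ) + 1 ∧ 2 * (j : ℕ) % 2 = 0 := ⟨rfl, by omega⟩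
      rw [if_pos hcond]
    simp [Matrix.map_apply, h]
  · intro k _ hk
    have hk' : (k : ℕ) ≠ 2 * (j : ℕ) + 1 := fun h => hk (Fin.ext h)
    have h0 : symplForm (2 * N) (e0 N j) k = 0 := by
      show (if 2 * (j : ℕ) + 1 = (k : ℕ) ∧ 2 * (j : ℕ) % 2 = 0 then (1 : ℝ)
        else if (k : ℕ) + 1 = 2 * (j : ℕ) ∧ (k : ℕ) % 2 = 0 then -1 else 0) = 0
      rw [if_neg (by omega), if_neg (by omega)]
    simp [Matrix.map_apply, h0]
  · intro h; exact absurd (Finset.mem_univ _) h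

lemma sig_mulVec_e1 (x : Fin (2 * N) → ℂ) (j : Fin N) :
    ((symplForm (2 * N)).map Complex.ofReal *ᵥ x) (e1 N j) = -x (e0 N j) := by
  simp only [Matrix.mulVec, dotProduct]
  rw [Finset.sum_eq_single (e0 N j)]
  · have h : symplForm (2 * N) (e1 N j) (e0 N j) = -1 := by
      show (if 2 * (j : ℕ) + 1 + 1 = 2 * (j : ℕ) ∧ (2 * (j : ℕ) + 1) % 2 = 0 then (1 : ℝ)
        else if 2 * (j : ℕ) + 1 = 2 * (j : ℕ) + 1 ∧ 2 * (j : ℕ) % 2 = 0 then -1 else 0) = -1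
      have hcond : 2 * (j : ℕ) + 1 = 2 * (j : ℕ) + 1 ∧ 2 * (j : ℕ) % 2 = 0 := ⟨rfl, by omega⟩
      rw [if_neg (by omega), if_pos hcond]
    simp [Matrix.map_apply, h]
  · intro k _ hk
    have hk' : (k : ℕ) ≠ 2 * (j : ℕ) := fun h => hk (Fin.ext h)
    have h0 : symplForm (2 * N) (e1 N j) k = 0 := by
      show (if 2 * (j : ℕ) + 1 + 1 = (k : ℕ) ∧ (2 * (j : ℕ) + 1) % 2 = 0 then (1 : ℝ)
        else if (k : ℕ) + 1 = 2 * (j : ℕ) + 1 ∧ (k : ℕ) % 2 = 0 then -1 else 0) = 0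
      rw [if_neg (by omega), if_neg (by omega)]
    simp [Matrix.map_apply, h0]
  · intro h; exact absurd (Finset.mem_univ _) h

lemma wdiag_mulVec (a : Fin N → ℝ) (x : Fin (2 * N) → ℂ) (i : Fin (2 * N)) :
    ((WDiag a).map Complex.ofReal *ᵥ x) i
      = (a ⟨(i : ℕ) / 2, by have := i.isLt; omega⟩ : ℂ) * x i := by
  rw [WDiag, Matrix.diagonal_map (by simp), Matrix.mulVec_diagonal]

lemma wdiag_mulVec_e0 (a : Fin N → ℝ) (x : Fin (2 * N) → ℂ) (j : Fin N) :
    ((WDiag a).map Complex.ofReal *ᵥ x) (e0 N j) = (a j : ℂ) * x (e0 N j) := by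
  rw [wdiag_mulVec]
  have h : ∀ (h : ((e0 N j : Fin (2 * N)) : ℕ) / 2 < N),
      (⟨((e0 N j : Fin (2 * N)) : ℕ) / 2, h⟩ : Fin N) = j := fun h => by
    apply Fin.ext
    show (2 * (j : ℕ)) / 2 = (j : ℕ)
    omega
  rw [h]

lemma wdiag_mulVec_e1 (a : Fin N → ℝ) (x : Fin (2 * N) → ℂ) (j : Fin N) :
    ((WDiag a).map Complex.ofReal *ᵥ x) (e1 N j) = (a j : ℂ) * x (e1 N j) := by
  rw [wdiag_mulVec]
  have h : ∀ (h : ((e1 N j : Fin (2 * N)) : ℕ) / 2 < N),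
      (⟨((e1 N j : Fin (2 * N)) : ℕ) / 2, h⟩ : Fin N) = j := fun h => by
    apply Fin.ext
    show (2 * (j : ℕ) + 1) / 2 = (j : ℕ)
    omega
  rw [h]

/-- The quadratic form of `D + iσ` splits into 2×2 blocks. -/
lemma quad (a : Fin N → ℝ) (x : Fin (2 * N) → ℂ) :
    star x ⬝ᵥ (((WDiag a).map Complex.ofReal
        + Complex.I • (symplForm (2 * N)).map Complex.ofReal) *ᵥ x)
      = ∑ j : Fin N,
          (((a j : ℂ) - 1) * (star (x (e0 N j)) * x (e0 N j)
              + star (x (e1 N j)) * x (e1 N j))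
            + star (x (e0 N j) + Complex.I * x (e1 N j))
                * (x (e0 N j) + Complex.I * x (e1 N j))) := by
  rw [dotProduct]
  rw [reindex_sum]
  refine Finset.sum_congr rfl fun j _ => ?_
  simp only [Matrix.add_mulVec, Matrix.smul_mulVec, Pi.add_apply, Pi.smul_apply,
    smul_eq_mul, Pi.star_apply, wdiag_mulVec_e0, wdiag_mulVec_e1, sig_mulVec_e0, sig_mulVec_e1]
  simp only [Complex.star_def, _root_.map_add, _root_.map_mul, Complex.conj_I]
  linear_combination (x (e1 N j) * (starRingEnd ℂ) (x (e1 N j))) * Complex.I_mul_I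

lemma symplForm_transpose (n : ℕ) : (symplForm n)ᵀ = -symplForm n := by
  ext i j
  simp only [Matrix.transpose_apply, Matrix.neg_apply, symplForm, Matrix.of_apply]
  split_ifs with h1 h2 h3 h4 h5
  all_goals first | omega | norm_num

lemma herm_aux {n : ℕ} (γ : Matrix (Fin n) (Fin n) ℝ) (hγ : γ.IsSymm) :
    (γ.map Complex.ofReal + Complex.I • (symplForm n).map Complex.ofReal).IsHermitian := by
  have h1 : (γ.map Complex.ofReal)ᴴ = γ.map Complex.ofReal := by
    ext i j
    simp only [Matrix.conjTranspose_apply, Matrix.map_apply, Complex.star_def,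
      Complex.conj_ofReal]
    norm_cast
    exact congrFun (congrFun hγ.eq i) j
  have h2 : ((symplForm n).map Complex.ofReal)ᴴ = -(symplForm n).map Complex.ofReal := by
    ext i j
    have h := congrFun (congrFun (symplForm_transpose n) i) j
    simp only [Matrix.transpose_apply, Matrix.neg_apply] at h
    simp only [Matrix.conjTranspose_apply, Matrix.map_apply, Matrix.neg_apply,
      Complex.star_def, Complex.conj_ofReal, h]
    push_cast
    ring
  have hsmul : (Complex.I • (symplForm n).map Complex.ofReal)ᴴ
      = Complex.I • (symplForm n).map Complex.ofReal := by
    rw [Matrix.conjTranspose_smul, h2]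
    simp [Complex.star_def, Complex.conj_I, smul_neg, neg_smul, neg_neg]
  exact Matrix.IsHermitian.add h1 hsmul

/-- Core: the Williamson diagonal matrix satisfies the uncertainty relation iff all
symplectic eigenvalues are at least 1. -/
lemma core (a : Fin N → ℝ) :
    ((WDiag a).map Complex.ofReal
        + Complex.I • (symplForm (2 * N)).map Complex.ofReal).PosSemidef
      ↔ ∀ j, 1 ≤ a j := by
  constructor
  · intro h j
    classical
    set x : Fin (2 * N) → ℂ :=
      fun i => if i = e0 N j then 1 else if i = e1 N j then Complex.I else 0 with hx
    have h2 := h.dotProduct_mulVec_nonneg x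
    rw [quad] at h2
    have hne : e1 N j ≠ e0 N j := by
      intro hc
      have hc' : 2 * (j : ℕ) + 1 = 2 * (j : ℕ) := congrArg Fin.val hc
      omega
    have hx0 : x (e0 N j) = 1 := by simp only [hx]; simp
    have hx1 : x (e1 N j) = Complex.I := by simp only [hx]; rw [if_neg hne]; simp
    have hsum : (∑ j' : Fin N,
        (((a j' : ℂ) - 1) * (star (x (e0 N j')) * x (e0 N j')
            + star (x (e1 N j')) * x (e1 N j'))
          + star (x (e0 N j') + Complex.I * x (e1 N j'))
              * (x (e0 N j') + Complex.I * x (e1 N j'))))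
        = ((a j : ℂ) - 1) * 2 := by
      rw [Finset.sum_eq_single j]
      · rw [hx0, hx1]
        simp only [Complex.star_def, _root_.map_add, _root_.map_mul, _root_.map_one,
          Complex.conj_I]
        linear_combination (Complex.I * Complex.I + 2 - (a j : ℂ)) * Complex.I_mul_I
      · intro j' _ hj'
        have hvne : (j' : ℕ) ≠ (j : ℕ) := fun h => hj' (Fin.ext h)
        have hne0 : e0 N j' ≠ e0 N j := by
          intro hc
          have hc' : 2 * (j' : ℕ) = 2 * (j : ℕ) := congrArg Fin.val hc
          omega
        have hne1 : e0 N j' ≠ e1 N j := by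
          intro hc
          have hc' : 2 * (j' : ℕ) = 2 * (j : ℕ) + 1 := congrArg Fin.val hc
          omega
        have hme0 : e1 N j' ≠ e0 N j := by
          intro hc
          have hc' : 2 * (j' : ℕ) + 1 = 2 * (j : ℕ) := congrArg Fin.val hc
          omega
        have hme1 : e1 N j' ≠ e1 N j := by
          intro hc
          have hc' : 2 * (j' : ℕ) + 1 = 2 * (j : ℕ) + 1 := congrArg Fin.val hc
          omega
        have hx0' : x (e0 N j') = 0 := by
          simp only [hx]
          rw [if_neg hne0, if_neg hne1]
        have hx1' : x (e1 N j') = 0 := by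
          simp only [hx]
          rw [if_neg hme0, if_neg hme1]
        simp [hx0', hx1']
      · intro h; exact absurd (Finset.mem_univ _) h
    rw [hsum] at h2
    have hcast : ((a j : ℂ) - 1) * 2 = (((a j - 1) * 2 : ℝ) : ℂ) := by push_cast; ring
    rw [hcast, Complex.zero_le_real] at h2
    linarith
  · intro h
    refine .of_dotProduct_mulVec_nonneg (herm_aux _ (Matrix.isSymm_diagonal _)) fun x => ?_
    rw [quad]
    refine Finset.sum_nonneg fun j _ => add_nonneg (mul_nonneg ?_
      (add_nonneg (star_mul_self_nonneg _) (star_mul_self_nonneg _)))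
      (star_mul_self_nonneg _)
    have hcast : ((a j : ℂ) - 1) = ((a j - 1 : ℝ) : ℂ) := by push_cast; ring
    rw [hcast, Complex.zero_le_real]
    linarith [h j]

lemma map_mul' {n : ℕ} (A B : Matrix (Fin n) (Fin n) ℝ) :
    (A * B).map Complex.ofReal = A.map Complex.ofReal * B.map Complex.ofReal :=
  Matrix.map_mul (f := Complex.ofRealHom)

end UncertAux

open UncertAux

/-- The uncertainty relation `Γ + iσ ≥ 0` holds iff all symplectic eigenvalues are `≥ 1`. -/
theorem uncertainty_iff_symplectic_eigenvalues_ge_one (N : ℕ) (hN : 1 ≤ N)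
    (Γ : Matrix (Fin (2 * N)) (Fin (2 * N)) ℝ) (hΓsymm : Γ.IsSymm) (hΓpos : Γ.PosDef)
    (S : Matrix (Fin (2 * N)) (Fin (2 * N)) ℝ) (a : Fin N → ℝ)
    (hS : IsSymplectic S) (ha : ∀ j, 0 < a j) (hW : S * Γ * Sᵀ = WDiag a) :
    (Γ.map Complex.ofReal + Complex.I • (symplForm (2 * N)).map Complex.ofReal).PosSemidef ↔
      ∀ j, 1 ≤ a j := by
  have hS' : S * symplForm (2 * N) * Sᵀ = symplForm (2 * N) := hS
  set M := S.map Complex.ofReal with hM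
  have hMH : Mᴴ = Sᵀ.map Complex.ofReal := by
    ext i j
    simp [hM, Matrix.conjTranspose_apply, Matrix.map_apply, Complex.star_def,
      Complex.conj_ofReal]
  have key : M * (Γ.map Complex.ofReal
        + Complex.I • (symplForm (2 * N)).map Complex.ofReal) * Mᴴ
      = (WDiag a).map Complex.ofReal
        + Complex.I • (symplForm (2 * N)).map Complex.ofReal := by
    rw [hMH, Matrix.mul_add, Matrix.add_mul]
    have e1 : M * Γ.map Complex.ofReal * Sᵀ.map Complex.ofReal
        = (WDiag a).map Complex.ofReal := by
      rw [hM, ← map_mul', ← map_mul', hW]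
    have e2 : M * (Complex.I • (symplForm (2 * N)).map Complex.ofReal)
          * Sᵀ.map Complex.ofReal
        = Complex.I • (symplForm (2 * N)).map Complex.ofReal := by
      rw [Matrix.mul_smul, Matrix.smul_mul, hM, ← map_mul', ← map_mul', hS']
    rw [e1, e2]
  have hdetΓ : 0 < Γ.det := hΓpos.det_pos
  have hdetD : 0 < (WDiag a).det := by
    rw [WDiag, Matrix.det_diagonal]
    exact Finset.prod_pos fun i _ => ha _
  have hdetS : S.det ≠ 0 := by
    have h := congrArg Matrix.det hW
    rw [Matrix.det_mul, Matrix.det_mul, Matrix.det_transpose] at h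
    intro h0
    rw [h0, zero_mul, zero_mul] at h
    exact absurd h.symm (ne_of_gt hdetD)
  have hMdet : IsUnit M.det := by
    have hMd : M.det = (S.det : ℂ) := (RingHom.map_det Complex.ofRealHom S).symm
    rw [hMd]
    exact isUnit_iff_ne_zero.mpr (by exact_mod_cast hdetS)
  constructor
  · intro hP
    have h := hP.mul_mul_conjTranspose_same M
    rw [key] at h
    exact (core a).mp h
  · intro hge
    have hD := (core a).mpr hge
    have h2 := hD.mul_mul_conjTranspose_same M⁻¹
    have hinv : M⁻¹ * ((WDiag a).map Complex.ofReal
          + Complex.I • (symplForm (2 * N)).map Complex.ofReal) * M⁻¹ᴴ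
        = Γ.map Complex.ofReal
          + Complex.I • (symplForm (2 * N)).map Complex.ofReal := by
      rw [← key, Matrix.conjTranspose_nonsing_inv]
      have h1 : M⁻¹ * M = 1 := Matrix.nonsing_inv_mul M hMdet
      have h2' : Mᴴ * Mᴴ⁻¹ = 1 :=
        Matrix.mul_nonsing_inv _ (by rw [Matrix.det_conjTranspose]; exact hMdet.star)
      simp only [← Matrix.mul_assoc]
      rw [h1, Matrix.one_mul, Matrix.mul_assoc, h2', Matrix.mul_one]
    rw [hinv] at h2
    exact h2
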